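/- Let H and K be Hilbert spaces and T : Dom(T) ⊆ H → K a densely defined closed linear operator whose range is closed in K. Let Π₁ : H → H and Π₂ : K → K be the orthogonal projections onto ker(T) and ker(T*) respectively. Then there exists a unique bounded linear operator S : K → H such that T∘S + Π₂ = I on K, S∘Π₂ = 0, and Π₁∘S = 0. -/

import Mathlib

open scoped LinearPMap

/-- `P` is the orthogonal projection of the Hilbert space `E` onto the set `S`:
every value lies in `S` and `x - P x` is orthogonal to `S`. -/
def IsOrthogonalProjectionOnto {E : Type*} [NormedAddCommGroup E] [InnerProductSpace ℂ E]
    (S : Set E) (P : E →L[ℂ] E) : Prop :=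
  (∀ x, P x ∈ S) ∧ ∀ x, ∀ y ∈ S, (inner ℂ (x - P x) y : ℂ) = 0

/-- The kernel of a partially defined operator, as a subset of the ambient space. -/
def pmapKer {E F : Type*} [NormedAddCommGroup E] [InnerProductSpace ℂ E]
    [NormedAddCommGroup F] [InnerProductSpace ℂ F] (T : E →ₗ.[ℂ] F) : Set E :=
  {x : E | ∃ hx : x ∈ T.domain, T ⟨x, hx⟩ = 0}

lemma pmapKer_iff_graph {E F : Type*} [NormedAddCommGroup E] [InnerProductSpace ℂ E]
    [NormedAddCommGroup F] [InnerProductSpace ℂ F] (T : E →ₗ.[ℂ] F) (x : E) :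
    x ∈ pmapKer T ↔ (x, (0 : F)) ∈ T.graph := by
  constructor
  · rintro ⟨hx, hx0⟩
    exact T.mem_graph_iff.mpr ⟨⟨x, hx⟩, rfl, hx0⟩
  · intro h
    obtain ⟨⟨y, hy⟩, h1, h2⟩ := T.mem_graph_iff.mp h
    dsimp at h1
    subst h1
    exact ⟨hy, h2⟩

lemma graph_to_apply {E F : Type*} [NormedAddCommGroup E] [InnerProductSpace ℂ E]
    [NormedAddCommGroup F] [InnerProductSpace ℂ F] (T : E →ₗ.[ℂ] F) {x : E} {w : F}
    (h : (x, w) ∈ T.graph) : ∃ hx : x ∈ T.domain, T ⟨x, hx⟩ = w := by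
  obtain ⟨⟨y, hy⟩, h1, h2⟩ := T.mem_graph_iff.mp h
  dsimp at h1
  subst h1
  exact ⟨hy, h2⟩

/-- If `x` is orthogonal to `S`, then `P x = 0` for an orthogonal projection `P` onto `S`. -/
lemma proj_eq_zero_of_orth {E : Type*} [NormedAddCommGroup E] [InnerProductSpace ℂ E]
    {S : Set E} {P : E →L[ℂ] E} (hP : IsOrthogonalProjectionOnto S P)
    {x : E} (hx : ∀ y ∈ S, (inner ℂ x y : ℂ) = 0) : P x = 0 := by
  have h1 : (inner ℂ (x - P x) (P x) : ℂ) = 0 := hP.2 x (P x) (hP.1 x)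
  have h2 : (inner ℂ x (P x) : ℂ) = 0 := hx (P x) (hP.1 x)
  have h3 : (inner ℂ (P x) (P x) : ℂ) = 0 := by
    have := h1
    rw [inner_sub_left, h2] at this
    linear_combination -this
  exact inner_self_eq_zero.mp h3

/-- An orthogonal projection onto a set closed under subtraction fixes the set. -/
lemma proj_fixes {E : Type*} [NormedAddCommGroup E] [InnerProductSpace ℂ E]
    {S : Set E} {P : E →L[ℂ] E} (hP : IsOrthogonalProjectionOnto S P)
    (hsub : ∀ x ∈ S, ∀ y ∈ S, x - y ∈ S) {z : E} (hz : z ∈ S) : P z = z := by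
  have hmem : z - P z ∈ S := hsub z hz (P z) (hP.1 z)
  have h1 : (inner ℂ (z - P z) (z - P z) : ℂ) = 0 := hP.2 z (z - P z) hmem
  have := inner_self_eq_zero.mp h1
  rw [sub_eq_zero] at this
  exact this.symm

/-- Existence and uniqueness of the partial inverse of a densely defined closed
operator with closed range. -/
theorem exists_unique_partial_inverse
    {H K : Type*} [NormedAddCommGroup H] [InnerProductSpace ℂ H] [CompleteSpace H]
    [NormedAddCommGroup K] [InnerProductSpace ℂ K] [CompleteSpace K]
    (T : H →ₗ.[ℂ] K) (hdense : Dense (T.domain : Set H)) (hclosed : T.IsClosed)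
    (hran : IsClosed (Set.range fun x : T.domain => T x))
    (P₁ : H →L[ℂ] H) (P₂ : K →L[ℂ] K)
    (hP₁ : IsOrthogonalProjectionOnto (pmapKer T) P₁)
    (hP₂ : IsOrthogonalProjectionOnto (pmapKer T.adjoint) P₂) :
    ∃! S : K →L[ℂ] H,
      (∀ v : K, ∃ hv : S v ∈ T.domain, T ⟨S v, hv⟩ + P₂ v = v) ∧
      (∀ v : K, S (P₂ v) = 0) ∧
      (∀ v : K, P₁ (S v) = 0) := by
  classical
  -- the kernels are closed under subtraction
  have hkerT_sub : ∀ x ∈ pmapKer T, ∀ y ∈ pmapKer T, x - y ∈ pmapKer T := by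
    intro x hx y hy
    rw [pmapKer_iff_graph] at hx hy ⊢
    have := T.graph.sub_mem hx hy
    simpa using this
  have hkerTadj_sub : ∀ x ∈ pmapKer T.adjoint, ∀ y ∈ pmapKer T.adjoint,
      x - y ∈ pmapKer T.adjoint := by
    intro x hx y hy
    rw [pmapKer_iff_graph] at hx hy ⊢
    have := T.adjoint.graph.sub_mem hx hy
    simpa using this
  -- the range of T as a submodule
  set R : Submodule ℂ K := LinearMap.range T.toFun with hR
  have hRclosed : IsClosed (R : Set K) := by
    rw [hR, LinearMap.coe_range]
    exact hran
  -- ker T† = Rᗮ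
  have hker_adj : ∀ y : K, y ∈ pmapKer T.adjoint ↔ y ∈ Rᗮ := by
    intro y
    constructor
    · rintro ⟨hy, hy0⟩
      rw [Submodule.mem_orthogonal]
      rintro u ⟨x, rfl⟩
      have hfa := LinearPMap.adjoint_isFormalAdjoint hdense (T := T) ⟨y, hy⟩ x
      rw [hy0, inner_zero_left] at hfa
      have h0 : (inner ℂ y (T.toFun x) : ℂ) = 0 := hfa.symm
      rw [← inner_conj_symm, h0, map_zero]
    · intro hy
      have hy0 : ∀ x : T.domain, (inner ℂ y (T x) : ℂ) = 0 := by
        intro x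
        have : (inner ℂ (T x) y : ℂ) = 0 :=
          (Submodule.mem_orthogonal R y).mp hy (T x) (LinearMap.mem_range_self _ x)
        rw [← inner_conj_symm, this, map_zero]
      have hdom : y ∈ T.adjoint.domain :=
        LinearPMap.mem_adjoint_domain_of_exists y
          ⟨0, fun x => by rw [inner_zero_left, hy0 x]⟩
      refine ⟨hdom, ?_⟩
      exact LinearPMap.adjoint_apply_eq hdense ⟨y, hdom⟩
        (fun x => by rw [inner_zero_left]; exact (hy0 x).symm)
  -- v - P₂ v lies in the range of T
  haveI : CompleteSpace R := hRclosed.completeSpace_coe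
  have memR : ∀ v : K, v - P₂ v ∈ R := by
    intro v
    rw [← Submodule.orthogonal_orthogonal R]
    rw [Submodule.mem_orthogonal]
    intro u hu
    have hu' : u ∈ pmapKer T.adjoint := (hker_adj u).mpr hu
    have := hP₂.2 v u hu'
    rw [← inner_conj_symm, this, map_zero]
  -- the defining predicate for S v
  set Q : K → H → Prop :=
    fun v x => (x, v - P₂ v) ∈ T.graph ∧ ∀ y ∈ pmapKer T, (inner ℂ x y : ℂ) = 0 with hQdef
  have huniq : ∀ v x x', Q v x → Q v x' → x = x' := by
    intro v x x' hx hx'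
    have hg : (x - x', (0 : K)) ∈ T.graph := by
      have := T.graph.sub_mem hx.1 hx'.1
      simpa using this
    have kmem : x - x' ∈ pmapKer T := (pmapKer_iff_graph T _).mpr hg
    have h0 : (inner ℂ (x - x') (x - x') : ℂ) = 0 := by
      rw [inner_sub_left, hx.2 _ kmem, hx'.2 _ kmem, sub_zero]
    have := inner_self_eq_zero.mp h0
    rwa [sub_eq_zero] at this
  have hex : ∀ v : K, ∃ x, Q v x := by
    intro v
    obtain ⟨u, hu⟩ := memR v
    refine ⟨(u : H) - P₁ u, ?_, ?_⟩
    · have h1 : ((u : H), T u) ∈ T.graph := T.mem_graph u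
      have h2 : (P₁ (u : H), (0 : K)) ∈ T.graph := by
        rw [← pmapKer_iff_graph]
        exact hP₁.1 u
      have := T.graph.sub_mem h1 h2
      simp only [Prod.mk_sub_mk, sub_zero] at this
      have hu' : (T u : K) = v - P₂ v := hu
      rwa [hu'] at this
    · exact hP₁.2 u
  set Sfun : K → H := fun v => Classical.choose (hex v) with hSfun
  have hQ : ∀ v : K, Q v (Sfun v) := fun v => Classical.choose_spec (hex v)
  -- linearity
  have hadd : ∀ v w : K, Sfun (v + w) = Sfun v + Sfun w := by
    intro v w
    refine huniq (v + w) _ _ (hQ _) ⟨?_, ?_⟩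
    · have := T.graph.add_mem (hQ v).1 (hQ w).1
      have heq : (v - P₂ v) + (w - P₂ w) = (v + w) - P₂ (v + w) := by
        rw [map_add]; abel
      simpa [Prod.mk_add_mk, heq] using this
    · intro y hy
      rw [inner_add_left, (hQ v).2 y hy, (hQ w).2 y hy, add_zero]
  have hsmul : ∀ (c : ℂ) (v : K), Sfun (c • v) = c • Sfun v := by
    intro c v
    refine huniq (c • v) _ _ (hQ _) ⟨?_, ?_⟩
    · have := T.graph.smul_mem c (hQ v).1
      have heq : c • (v - P₂ v) = c • v - P₂ (c • v) := by
        rw [map_smul, smul_sub]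
      simpa [Prod.smul_mk, heq] using this
    · intro y hy
      rw [inner_smul_left, (hQ v).2 y hy, mul_zero]
  set Slin : K →ₗ[ℂ] H :=
    { toFun := Sfun, map_add' := hadd, map_smul' := hsmul } with hSlin
  -- continuity via the closed graph theorem
  have hgraph : (Slin.graph : Set (K × H)) =
      {p : K × H | (p.2, p.1 - P₂ p.1) ∈ T.graph ∧
        ∀ y ∈ pmapKer T, (inner ℂ p.2 y : ℂ) = 0} := by
    ext p
    rw [SetLike.mem_coe, LinearMap.mem_graph_iff]
    constructor
    · intro h
      have hps : p.2 = Sfun p.1 := h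
      simp only [Set.mem_setOf_eq]
      rw [hps]
      exact hQ p.1
    · intro h
      simp only [Set.mem_setOf_eq] at h
      exact huniq p.1 _ _ h (hQ p.1)
  have hgraph_closed : IsClosed (Slin.graph : Set (K × H)) := by
    rw [hgraph]
    have h1 : IsClosed {p : K × H | (p.2, p.1 - P₂ p.1) ∈ T.graph} := by
      have hc : Continuous (fun p : K × H => (p.2, p.1 - P₂ p.1)) := by
        fun_prop
      exact hclosed.preimage hc
    have h2 : IsClosed {p : K × H | ∀ y ∈ pmapKer T, (inner ℂ p.2 y : ℂ) = 0} := by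
      have : {p : K × H | ∀ y ∈ pmapKer T, (inner ℂ p.2 y : ℂ) = 0} =
          ⋂ y ∈ pmapKer T, {p : K × H | (inner ℂ p.2 y : ℂ) = 0} := by
        ext p; simp
      rw [this]
      refine isClosed_biInter fun y _ => ?_
      exact isClosed_eq (Continuous.inner continuous_snd continuous_const) continuous_const
    have hsets : {p : K × H | (p.2, p.1 - P₂ p.1) ∈ T.graph ∧
        ∀ y ∈ pmapKer T, (inner ℂ p.2 y : ℂ) = 0} =
        {p : K × H | (p.2, p.1 - P₂ p.1) ∈ T.graph} ∩
        {p : K × H | ∀ y ∈ pmapKer T, (inner ℂ p.2 y : ℂ) = 0} := rfl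
    rw [hsets]
    exact h1.inter h2
  have Scont : Continuous Slin := Slin.continuous_of_isClosed_graph hgraph_closed
  set S : K →L[ℂ] H := { toLinearMap := Slin, cont := Scont } with hS
  have hSapp : ∀ v : K, S v = Sfun v := fun v => rfl
  refine ⟨S, ⟨?_, ?_, ?_⟩, ?_⟩
  · intro v
    obtain ⟨hv, heq⟩ := graph_to_apply T (hQ v).1
    refine ⟨hv, ?_⟩
    show (T ⟨Sfun v, hv⟩ : K) + P₂ v = v
    rw [heq]
    abel
  · intro v
    have hQ0 : Q (P₂ v) 0 := by
      constructor
      · have hfix : P₂ (P₂ v) = P₂ v := proj_fixes hP₂ hkerTadj_sub (hP₂.1 v)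
        rw [hfix, sub_self]
        exact T.graph.zero_mem
      · intro y _; exact inner_zero_left y
    exact huniq (P₂ v) _ _ (hQ _) hQ0
  · intro v
    exact proj_eq_zero_of_orth hP₁ (hQ v).2
  · intro S' ⟨h1, h2, h3⟩
    ext v
    refine huniq v (S' v) (Sfun v) ⟨?_, ?_⟩ (hQ v)
    · obtain ⟨hv, heq⟩ := h1 v
      have : T ⟨S' v, hv⟩ = v - P₂ v := by rw [eq_sub_iff_add_eq]; exact heq
      exact T.mem_graph_iff.mpr ⟨⟨S' v, hv⟩, rfl, this⟩
    · intro y hy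
      have := hP₁.2 (S' v) y hy
      rwa [h3 v, sub_zero] at this
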